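/- Let Y = M + E ∈ ℝ^{n₁×n₂} where rank(M) ≤ k, and let M̂ be a best rank-k approximation of Y in Frobenius norm. Then ‖M̂ − M‖_F² ≤ 8k‖Y − M‖², where ‖·‖ denotes the spectral (operator) norm. -/

import Mathlib

/-- Squared Frobenius norm of a matrix. -/
noncomputable def frobSq {n₁ n₂ : ℕ} (A : Matrix (Fin n₁) (Fin n₂) ℝ) : ℝ :=
  ∑ i, ∑ j, (A i j) ^ 2

/-- Spectral (operator) norm of a matrix. -/
noncomputable def specNorm {n₁ n₂ : ℕ} (A : Matrix (Fin n₁) (Fin n₂) ℝ) : ℝ :=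
  ‖LinearMap.toContinuousLinearMap (Matrix.toEuclideanLin A)‖

open Finset Matrix Module Submodule
open scoped RealInnerProductSpace


private lemma inner_euc {n : ℕ} (x y : EuclideanSpace ℝ (Fin n)) : ⟪x, y⟫ = ∑ j, x j * y j := by
  simp [PiLp.inner_apply, RCLike.inner_apply, mul_comm]

private lemma onb_expand {n : ℕ} (V : Submodule ℝ (EuclideanSpace ℝ (Fin n)))
    (b : OrthonormalBasis (Fin (finrank ℝ V)) ℝ V) (x : V) :
    (x : EuclideanSpace ℝ (Fin n)) =
      ∑ l, ⟪(b l : EuclideanSpace ℝ (Fin n)), (x : EuclideanSpace ℝ (Fin n))⟫ •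
        (b l : EuclideanSpace ℝ (Fin n)) := by
  conv_lhs => rw [← b.sum_repr x]
  push_cast
  refine Finset.sum_congr rfl fun l _ => ?_
  rw [b.repr_apply_apply]
  congr 1

/-- If `rank M ≤ k` and `M̂` is a best rank-`k` approximation of
`Y` in Frobenius norm, then `‖M̂ − M‖_F² ≤ 8k‖Y − M‖²` (spectral norm). -/
theorem best_rank_k_approx_error {n₁ n₂ k : ℕ}
    (Y M Mhat : Matrix (Fin n₁) (Fin n₂) ℝ)
    (hM : M.rank ≤ k) (hMhat : Mhat.rank ≤ k)
    (hbest : ∀ B : Matrix (Fin n₁) (Fin n₂) ℝ, B.rank ≤ k →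
      frobSq (Y - Mhat) ≤ frobSq (Y - B)) :
    frobSq (Mhat - M) ≤ 8 * (k : ℝ) * specNorm (Y - M) ^ 2 := by
  set D : Matrix (Fin n₁) (Fin n₂) ℝ := Mhat - M with hD
  set Em : Matrix (Fin n₁) (Fin n₂) ℝ := Y - M with hEm
  set N : ℝ := specNorm Em with hN
  have hNnn : 0 ≤ N := norm_nonneg _
  -- Step A: optimality gives  frobSq D ≤ 2 * I
  set I : ℝ := ∑ i, ∑ j, D i j * Em i j with hI
  have hopt : frobSq D ≤ 2 * I := by
    have h : frobSq (Em - D) ≤ frobSq Em := by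
      have h0 := hbest M hM
      have e1 : Y - Mhat = Em - D := by rw [hEm, hD]; abel
      rw [e1] at h0
      simpa [hEm] using h0
    have point : ∀ i j, ((Em - D) i j) ^ 2 =
        Em i j ^ 2 - 2 * (D i j * Em i j) + D i j ^ 2 := by
      intro i j; simp only [Matrix.sub_apply]; ring
    have key : frobSq (Em - D) = frobSq Em - 2 * I + frobSq D := by
      simp only [frobSq, point, Finset.sum_add_distrib, Finset.sum_sub_distrib,
        ← Finset.mul_sum, hI]
    linarith
  -- rows
  set d : Fin n₁ → EuclideanSpace ℝ (Fin n₂) :=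
    fun i => (WithLp.equiv 2 (Fin n₂ → ℝ)).symm (D i) with hd
  set em : Fin n₁ → EuclideanSpace ℝ (Fin n₂) :=
    fun i => (WithLp.equiv 2 (Fin n₂ → ℝ)).symm (Em i) with hem
  set mr : Fin n₁ → EuclideanSpace ℝ (Fin n₂) :=
    fun i => (WithLp.equiv 2 (Fin n₂ → ℝ)).symm (M i) with hmr
  set mh : Fin n₁ → EuclideanSpace ℝ (Fin n₂) :=
    fun i => (WithLp.equiv 2 (Fin n₂ → ℝ)).symm (Mhat i) with hmh
  set V : Submodule ℝ (EuclideanSpace ℝ (Fin n₂)) :=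
    span ℝ (Set.range mr) ⊔ span ℝ (Set.range mh) with hV
  have hdV : ∀ i, d i ∈ V := by
    intro i
    have h1 : mh i ∈ V := Submodule.mem_sup_right (subset_span ⟨i, rfl⟩)
    have h2 : mr i ∈ V := Submodule.mem_sup_left (subset_span ⟨i, rfl⟩)
    have hdi : d i = mh i - mr i := by
      ext j
      simp [hd, hmh, hmr, hD]
    rw [hdi]
    exact V.sub_mem h1 h2
  have hrk : (finrank ℝ V : ℝ) ≤ 2 * k := by
    have h1 : M.rank = finrank ℝ (span ℝ (Set.range mr)) := by
      rw [M.rank_eq_finrank_span_row]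
      have e : Set.range mr =
          ((WithLp.linearEquiv 2 ℝ (Fin n₂ → ℝ)).symm : (Fin n₂ → ℝ) →ₗ[ℝ] _) '' Set.range M.row := by
        rw [← Set.range_comp]; rfl
      rw [e, Submodule.span_image, LinearEquiv.finrank_map_eq]
    have h2 : Mhat.rank = finrank ℝ (span ℝ (Set.range mh)) := by
      rw [Mhat.rank_eq_finrank_span_row]
      have e : Set.range mh =
          ((WithLp.linearEquiv 2 ℝ (Fin n₂ → ℝ)).symm : (Fin n₂ → ℝ) →ₗ[ℝ] _) '' Set.range Mhat.row := by
        rw [← Set.range_comp]; rfl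
      rw [e, Submodule.span_image, LinearEquiv.finrank_map_eq]
    have h3 := Submodule.finrank_add_le_finrank_add_finrank
      (span ℝ (Set.range mr)) (span ℝ (Set.range mh))
    have : finrank ℝ V ≤ 2 * k := by
      rw [hV]
      omega
    calc (finrank ℝ V : ℝ) ≤ ((2 * k : ℕ) : ℝ) := by exact_mod_cast this
      _ = 2 * k := by push_cast; ring
  set b := stdOrthonormalBasis ℝ V with hb
  set w : Fin (finrank ℝ V) → EuclideanSpace ℝ (Fin n₂) := fun l => (b l : _) with hw
  set c : Fin n₁ → Fin (finrank ℝ V) → ℝ := fun i l => ⟪w l, d i⟫ with hc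
  have hexp : ∀ i, d i = ∑ l, c i l • w l := by
    intro i
    exact onb_expand V b ⟨d i, hdV i⟩
  have hsum : ∀ (i : Fin n₁) (y : EuclideanSpace ℝ (Fin n₂)),
      ⟪d i, y⟫ = ∑ l, c i l * ⟪w l, y⟫ := by
    intro i y
    conv_lhs => rw [hexp i]
    rw [sum_inner]
    exact Finset.sum_congr rfl fun l _ => real_inner_smul_left _ _ _
  -- Parseval: S = ∑ l ∑ i (c i l)^2
  have hS : frobSq D = ∑ l, ∑ i, c i l ^ 2 := by
    rw [Finset.sum_comm]
    refine Finset.sum_congr rfl fun i _ => ?_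
    have h1 : ⟪d i, d i⟫ = ∑ l, c i l * c i l := by
      rw [hsum i (d i)]
    have h2 : ⟪d i, d i⟫ = ∑ j, D i j * D i j := by
      rw [inner_euc]; simp [hd]
    calc ∑ j, D i j ^ 2 = ∑ j, D i j * D i j := by simp [sq]
      _ = ∑ l, c i l * c i l := by rw [← h2, h1]
      _ = ∑ l, c i l ^ 2 := by simp [sq]
  -- g vectors
  set g : Fin (finrank ℝ V) → EuclideanSpace ℝ (Fin n₁) :=
    fun l => Matrix.toEuclideanLin Em (w l) with hg
  have hg_apply : ∀ l i, g l i = ⟪w l, em i⟫ := by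
    intro l i
    rw [inner_euc]
    simp [hg, Matrix.toEuclideanLin_apply, Matrix.mulVec, dotProduct, hem, mul_comm]
  have hIg : I = ∑ l, ∑ i, c i l * g l i := by
    rw [Finset.sum_comm]
    rw [hI]
    refine Finset.sum_congr rfl fun i _ => ?_
    have h1 : ∑ j, D i j * Em i j = ⟪d i, em i⟫ := by
      rw [inner_euc]; simp [hd, hem]
    rw [h1, hsum i (em i)]
    exact Finset.sum_congr rfl fun l _ => by rw [hg_apply]
  -- T bound
  set T : ℝ := ∑ l, ∑ i, g l i ^ 2 with hT
  have hTle : T ≤ (finrank ℝ V : ℝ) * N ^ 2 := by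
    have hterm : ∀ l, ∑ i, g l i ^ 2 ≤ N ^ 2 := by
      intro l
      have h1 : ∑ i, g l i ^ 2 = ‖g l‖ ^ 2 := by
        rw [← real_inner_self_eq_norm_sq, inner_euc]
        simp [sq]
      have h2 : ‖g l‖ ≤ N * ‖w l‖ := by
        exact (LinearMap.toContinuousLinearMap (Matrix.toEuclideanLin Em)).le_opNorm (w l)
      have h3 : ‖w l‖ = 1 := b.orthonormal.1 l
      rw [h3, mul_one] at h2
      rw [h1]
      exact pow_le_pow_left₀ (norm_nonneg _) h2 2
    calc T ≤ ∑ _l : Fin (finrank ℝ V), N ^ 2 := Finset.sum_le_sum fun l _ => hterm l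
      _ = (finrank ℝ V : ℝ) * N ^ 2 := by
        rw [Finset.sum_const, Finset.card_univ, Fintype.card_fin, nsmul_eq_mul]
  -- Cauchy–Schwarz
  have hCS : I ^ 2 ≤ frobSq D * T := by
    have e1 : I = ∑ p : Fin (finrank ℝ V) × Fin n₁, c p.2 p.1 * g p.1 p.2 := by
      rw [hIg, ← Finset.univ_product_univ, Finset.sum_product]
    have e2 : frobSq D = ∑ p : Fin (finrank ℝ V) × Fin n₁, c p.2 p.1 ^ 2 := by
      rw [hS, ← Finset.univ_product_univ, Finset.sum_product]
    have e3 : T = ∑ p : Fin (finrank ℝ V) × Fin n₁, g p.1 p.2 ^ 2 := by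
      rw [hT, ← Finset.univ_product_univ, Finset.sum_product]
    rw [e1, e2, e3]
    exact Finset.sum_mul_sq_le_sq_mul_sq _ _ _
  -- combine
  have hSnn : 0 ≤ frobSq D := Finset.sum_nonneg fun i _ =>
    Finset.sum_nonneg fun j _ => sq_nonneg _
  have hTk : T ≤ 2 * (k : ℝ) * N ^ 2 :=
    hTle.trans (mul_le_mul_of_nonneg_right hrk (sq_nonneg N))
  have h4 : frobSq D ^ 2 ≤ 4 * (frobSq D * T) := by
    have a1 : frobSq D * frobSq D ≤ (2 * I) * (2 * I) := mul_self_le_mul_self hSnn hopt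
    have a2 : I * I = I ^ 2 := (pow_two I).symm
    have a3 : frobSq D ^ 2 = frobSq D * frobSq D := pow_two _
    linarith [hCS]
  have h5 : frobSq D * frobSq D ≤ (8 * (k : ℝ) * N ^ 2) * frobSq D := by
    calc frobSq D * frobSq D = frobSq D ^ 2 := (pow_two _).symm
      _ ≤ 4 * (frobSq D * T) := h4
      _ ≤ 4 * (frobSq D * (2 * (k : ℝ) * N ^ 2)) := by
          have := mul_le_mul_of_nonneg_left hTk hSnn
          linarith
      _ = (8 * (k : ℝ) * N ^ 2) * frobSq D := by ring
  rcases eq_or_lt_of_le hSnn with hzero | hpos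
  · rw [← hzero]
    positivity
  · exact (mul_le_mul_iff_of_pos_right hpos).mp h5
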